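/- Let B be a real K×K matrix with det(B) ≠ 0 and det(B(l|l)) ≠ 0 for every l, and let l ≠ m be indices in {1,…,K}. Then −[b_{mm} · f_{lm}^T (B(m|m))^{-1} b_{·m}] / [b_{mm} − b_{m·}(B(m|m))^{-1}b_{·m}] = −b_{lm}/[b_{ll} − b_{l·}(B(l|l))^{-1}b_{·l}] + Σ_{k≠l, k≠m} [b_{km} · f_{lk}^T (B(k|k))^{-1} b_{·k}] / [b_{kk} − b_{k·}(B(k|k))^{-1}b_{·k}]. -/

import Mathlib

open Matrix

private lemma aux_key {K : ℕ} (B : Matrix (Fin (K + 1)) (Fin (K + 1)) ℝ)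
    (hdet : B.det ≠ 0) (k : Fin (K + 1))
    (hk : (B.submatrix k.succAbove k.succAbove).det ≠ 0) :
    (B k k - (fun j => B k (k.succAbove j)) ⬝ᵥ
        ((B.submatrix k.succAbove k.succAbove)⁻¹ *ᵥ (fun j => B (k.succAbove j) k))) * B⁻¹ k k = 1
    ∧ ∀ i : Fin K,
      ((B.submatrix k.succAbove k.succAbove)⁻¹ *ᵥ (fun j => B (k.succAbove j) k)) i
        = -((B k k - (fun j => B k (k.succAbove j)) ⬝ᵥ
            ((B.submatrix k.succAbove k.succAbove)⁻¹ *ᵥ (fun j => B (k.succAbove j) k)))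
            * B⁻¹ (k.succAbove i) k) := by
  set M := B.submatrix k.succAbove k.succAbove with hM
  set v : Fin K → ℝ := M⁻¹ *ᵥ (fun j => B (k.succAbove j) k) with hv
  set s : ℝ := B k k - (fun j => B k (k.succAbove j)) ⬝ᵥ v with hs
  have hMv : M *ᵥ v = fun j => B (k.succAbove j) k := by
    rw [hv, mulVec_mulVec, mul_nonsing_inv M (isUnit_iff_ne_zero.mpr hk), one_mulVec]
  set u : Fin (K + 1) → ℝ := k.insertNth 1 (fun j => -(v j)) with hu
  have hnegsum : ∀ i, ∑ j : Fin K, B i (k.succAbove j) * -(v j)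
      = -∑ j : Fin K, B i (k.succAbove j) * v j := by
    intro i
    rw [← Finset.sum_neg_distrib]
    exact Finset.sum_congr rfl (fun j _ => by ring)
  have hBu : B *ᵥ u = Pi.single k s := by
    funext i
    have hsplit : (B *ᵥ u) i = B i k * u k + ∑ j : Fin K, B i (k.succAbove j) * u (k.succAbove j) := by
      simp only [mulVec, dotProduct]
      exact Fin.sum_univ_succAbove (fun j => B i j * u j) k
    rw [hsplit]
    simp only [hu, Fin.insertNth_apply_same, Fin.insertNth_apply_succAbove]
    rw [hnegsum i]
    rcases eq_or_ne i k with rfl | hne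
    · rw [Pi.single_eq_same, hs]
      simp only [dotProduct]
      ring
    · rw [Pi.single_eq_of_ne hne]
      obtain ⟨j', hj'⟩ := Fin.exists_succAbove_eq hne
      have hMvj : ∑ j : Fin K, B i (k.succAbove j) * v j = B (k.succAbove j') k := by
        have := congrFun hMv j'
        simp only [mulVec, dotProduct, hM, submatrix_apply] at this
        rw [← hj']; exact this
      rw [hMvj, hj']
      ring
  have hu_eq : ∀ i, u i = s * B⁻¹ i k := by
    intro i
    have h1 : B⁻¹ *ᵥ (B *ᵥ u) = u := by
      rw [mulVec_mulVec, nonsing_inv_mul B (isUnit_iff_ne_zero.mpr hdet), one_mulVec]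
    rw [hBu] at h1
    have h3 := congrFun h1 i
    rw [mulVec_single] at h3
    rw [← h3]; simp only [Pi.smul_apply, col_apply, op_smul_eq_mul]; ring
  constructor
  · have := hu_eq k
    rw [hu, Fin.insertNth_apply_same] at this
    linarith [this]
  · intro i
    have := hu_eq (k.succAbove i)
    rw [hu, Fin.insertNth_apply_succAbove] at this
    linarith [this]

theorem stmt_3 {K : ℕ} (B : Matrix (Fin (K + 1)) (Fin (K + 1)) ℝ)
    (idx : Fin (K + 1) → Fin (K + 1) → Fin K)
    (hidx : ∀ p q : Fin (K + 1), q ≠ p → p.succAbove (idx p q) = q)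
    (hdet : B.det ≠ 0)
    (hdiag : ∀ l : Fin (K + 1), (B.submatrix l.succAbove l.succAbove).det ≠ 0)
    (l m : Fin (K + 1)) (hlm : l ≠ m) :
    -(B m m * (((B.submatrix m.succAbove m.succAbove)⁻¹ *ᵥ (fun j => B (m.succAbove j) m))
          (idx m l))
        / (B m m - (fun j => B m (m.succAbove j)) ⬝ᵥ
            ((B.submatrix m.succAbove m.succAbove)⁻¹ *ᵥ (fun j => B (m.succAbove j) m))))
    = -(B l m / (B l l - (fun j => B l (l.succAbove j)) ⬝ᵥ
          ((B.submatrix l.succAbove l.succAbove)⁻¹ *ᵥ (fun j => B (l.succAbove j) l))))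
      + ∑ k ∈ (Finset.univ.erase l).erase m,
          B k m * (((B.submatrix k.succAbove k.succAbove)⁻¹ *ᵥ (fun j => B (k.succAbove j) k))
              (idx k l))
            / (B k k - (fun j => B k (k.succAbove j)) ⬝ᵥ
                ((B.submatrix k.succAbove k.succAbove)⁻¹ *ᵥ (fun j => B (k.succAbove j) k))) := by
  have hterm : ∀ k : Fin (K + 1), k ≠ l →
      B k m * (((B.submatrix k.succAbove k.succAbove)⁻¹ *ᵥ (fun j => B (k.succAbove j) k))
          (idx k l))
        / (B k k - (fun j => B k (k.succAbove j)) ⬝ᵥ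
            ((B.submatrix k.succAbove k.succAbove)⁻¹ *ᵥ (fun j => B (k.succAbove j) k)))
      = -(B k m * B⁻¹ l k) := by
    intro k hkl
    obtain ⟨h1, h2⟩ := aux_key B hdet k (hdiag k)
    set s := B k k - (fun j => B k (k.succAbove j)) ⬝ᵥ
        ((B.submatrix k.succAbove k.succAbove)⁻¹ *ᵥ (fun j => B (k.succAbove j) k)) with hsdef
    clear_value s
    have hs0 : s ≠ 0 := left_ne_zero_of_mul_eq_one h1
    have hv := h2 (idx k l)
    rw [hidx k l (Ne.symm hkl)] at hv
    rw [hv, div_eq_iff hs0]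
    ring
  have htl : B l m / (B l l - (fun j => B l (l.succAbove j)) ⬝ᵥ
        ((B.submatrix l.succAbove l.succAbove)⁻¹ *ᵥ (fun j => B (l.succAbove j) l)))
      = B l m * B⁻¹ l l := by
    obtain ⟨h1, _⟩ := aux_key B hdet l (hdiag l)
    set s := B l l - (fun j => B l (l.succAbove j)) ⬝ᵥ
        ((B.submatrix l.succAbove l.succAbove)⁻¹ *ᵥ (fun j => B (l.succAbove j) l)) with hsdef
    clear_value s
    have hs0 : s ≠ 0 := left_ne_zero_of_mul_eq_one h1
    rw [div_eq_iff hs0]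
    linear_combination -(B l m) * h1
  have hAB : ∑ k : Fin (K + 1), B⁻¹ l k * B k m = 0 := by
    have h := nonsing_inv_mul B (isUnit_iff_ne_zero.mpr hdet)
    have h' := congrFun (congrFun h l) m
    rw [mul_apply] at h'
    rw [h']
    exact one_apply_ne hlm
  have hml : m ∈ Finset.univ.erase l := Finset.mem_erase.mpr ⟨Ne.symm hlm, Finset.mem_univ m⟩
  rw [← Finset.add_sum_erase _ (fun k => B⁻¹ l k * B k m) (Finset.mem_univ l),
    ← Finset.add_sum_erase _ (fun k => B⁻¹ l k * B k m) hml] at hAB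
  rw [hterm m (Ne.symm hlm), htl,
    Finset.sum_congr rfl (fun k hk => hterm k (Finset.ne_of_mem_erase (Finset.mem_erase.mp hk).2))]
  rw [Finset.sum_neg_distrib]
  have hc : ∑ k ∈ (Finset.univ.erase l).erase m, B k m * B⁻¹ l k
      = ∑ k ∈ (Finset.univ.erase l).erase m, B⁻¹ l k * B k m :=
    Finset.sum_congr rfl (fun k _ => mul_comm _ _)
  rw [hc]
  linarith [hAB]
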